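/- Suppose that for some observation point x_k there exists an index i such that M_i(x_k) = Y(x_k) almost surely, and that K_M(x_k) = Cov(M(x_k), M(x_k)) is invertible. Then the aggregated predictor interpolates at x_k: M_A(x_k) = Y(x_k) almost surely, and hence v_A(x_k) = E[(Y(x_k) - M_A(x_k))^2] = 0. -/

import Mathlib

open MeasureTheory Matrix

/-- Interpolation property: if one of the sub-models coincides almost surely with `Y` at
the point `x_k`, and `K_M(x_k)` is invertible, then the aggregated predictor
`M_A = k_Mᵀ K_M⁻¹ M` also coincides almost surely with `Y` there, and its mean squared
error vanishes. -/
theorem stmt_2 {Ω : Type*} [MeasurableSpace Ω] (μ : Measure Ω) [IsProbabilityMeasure μ]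
    {p : ℕ} (Y : Ω → ℝ) (M : Fin p → Ω → ℝ)
    (hY : MemLp Y 2 μ) (hM : ∀ i, MemLp (M i) 2 μ)
    (hYc : ∫ ω, Y ω ∂μ = 0) (hMc : ∀ i, ∫ ω, M i ω ∂μ = 0)
    (kM : Fin p → ℝ) (hkM : ∀ i, kM i = ∫ ω, M i ω * Y ω ∂μ)
    (KM : Matrix (Fin p) (Fin p) ℝ) (hKM : ∀ i j, KM i j = ∫ ω, M i ω * M j ω ∂μ)
    (hinv : IsUnit KM.det)
    (i₀ : Fin p) (hMi : M i₀ =ᵐ[μ] Y) :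
    (fun ω => ∑ i, (KM⁻¹ *ᵥ kM) i * M i ω) =ᵐ[μ] Y ∧
    ∫ ω, (Y ω - ∑ i, (KM⁻¹ *ᵥ kM) i * M i ω) ^ 2 ∂μ = 0 := by
  have hk : kM = KM *ᵥ Pi.single i₀ 1 := by
    funext i
    rw [mulVec_single]
    simp only [Pi.smul_apply, MulOpposite.op_one, one_smul, col_apply]
    rw [hkM i, hKM i i₀]
    exact integral_congr_ae (hMi.mono fun ω h => by simp [h])
  have hc : KM⁻¹ *ᵥ kM = Pi.single i₀ 1 := by
    rw [hk, mulVec_mulVec, Matrix.nonsing_inv_mul _ hinv, one_mulVec]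
  have hsum : ∀ ω, (∑ i, (KM⁻¹ *ᵥ kM) i * M i ω) = M i₀ ω := by
    intro ω
    rw [hc]
    rw [Finset.sum_eq_single i₀]
    · simp
    · intro b _ hb; simp [Pi.single_apply, hb]
    · simp
  have h1 : (fun ω => ∑ i, (KM⁻¹ *ᵥ kM) i * M i ω) =ᵐ[μ] Y := by
    filter_upwards [hMi] with ω h
    rw [hsum ω, h]
  refine ⟨h1, ?_⟩
  rw [show (0:ℝ) = ∫ (_ : Ω), (0:ℝ) ∂μ by simp]
  exact integral_congr_ae (h1.mono fun ω h => by simp [h])
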